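/- Let R be a commutative Noetherian ring in which every non-nilpotent ideal contains a nonzero idempotent element. Then R is semilocal, i.e., R has only finitely many maximal ideals. -/

import Mathlib

/-- In a Noetherian ring where every nonzero ideal contains a nonzero idempotent,
every ideal is generated by an idempotent. -/
lemma every_ideal_idem {Q : Type*} [CommRing Q] [IsNoetherianRing Q]
    (h : ∀ J : Ideal Q, J ≠ ⊥ → ∃ e ∈ J, e ≠ (0 : Q) ∧ e * e = e) (I : Ideal Q) :
    ∃ e : Q, e * e = e ∧ I = Ideal.span {e} := by
  classical
  set S : Set (Ideal Q) := {J | J ≤ I ∧ ∃ e : Q, e * e = e ∧ J = Ideal.span {e}}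
  have hS : S.Nonempty := ⟨⊥, bot_le, 0, by ring, (Ideal.span_singleton_eq_bot.mpr rfl).symm⟩
  obtain ⟨M, ⟨hMI, e, he, rfl⟩, hmax⟩ :=
    (set_has_maximal_iff_noetherian.mpr ‹_›) S hS
  have heI : e ∈ I := hMI (Ideal.subset_span rfl)
  set K : Ideal Q := I ⊓ LinearMap.ker (LinearMap.lsmul Q Q e)
  by_cases hK : K = ⊥
  · refine ⟨e, he, le_antisymm ?_ hMI⟩
    intro x hx
    have hmem : x - e * x ∈ K := by
      refine Submodule.mem_inf.mpr ⟨I.sub_mem hx (I.mul_mem_left e hx), LinearMap.mem_ker.mpr ?_⟩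
      show e • (x - e * x) = 0
      rw [smul_eq_mul, mul_sub, ← mul_assoc, he, sub_self]
    rw [hK, Ideal.mem_bot, sub_eq_zero] at hmem
    rw [hmem]
    exact Ideal.mem_span_singleton'.mpr ⟨x, mul_comm x e⟩
  · obtain ⟨f, hfK, hf0, hff⟩ := h K hK
    obtain ⟨hfI, hfe⟩ := hfK
    have hef : e * f = 0 := by simpa using hfe
    exfalso
    have hgg : (e + f) * (e + f) = e + f := by
      have : (e + f) * (e + f) = e * e + f * f + 2 * (e * f) := by ring
      rw [this, he, hff, hef]; ring
    have hle : Ideal.span {e} ≤ Ideal.span {e + f} :=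
      Ideal.span_le.mpr (Set.singleton_subset_iff.mpr
        (Ideal.mem_span_singleton'.mpr ⟨e, by rw [mul_add, he, hef, add_zero]⟩))
    have hfmem : f ∈ Ideal.span ({e + f} : Set Q) :=
      Ideal.mem_span_singleton'.mpr ⟨f, by rw [mul_add, hff, mul_comm f e, hef, zero_add]⟩
    have hne : Ideal.span {e} ≠ Ideal.span ({e + f} : Set Q) := by
      intro hEq
      obtain ⟨c, hc⟩ := Ideal.mem_span_singleton'.mp (hEq ▸ hfmem)
      apply hf0
      calc f = f * f := hff.symm
        _ = c * e * f := by rw [hc]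
        _ = c * (e * f) := by ring
        _ = 0 := by rw [hef, mul_zero]
    exact hmax (Ideal.span {e + f})
      ⟨Ideal.span_le.mpr (Set.singleton_subset_iff.mpr (I.add_mem heI hfI)), e + f, hgg, rfl⟩
      (lt_of_le_of_ne hle hne)

lemma semisimple_of_idem {Q : Type*} [CommRing Q] [IsNoetherianRing Q]
    (h : ∀ J : Ideal Q, J ≠ ⊥ → ∃ e ∈ J, e ≠ (0 : Q) ∧ e * e = e) :
    IsSemisimpleRing Q := by
  rw [IsSemisimpleRing, isSemisimpleModule_iff]
  constructor
  intro I
  obtain ⟨e, he, rfl⟩ := every_ideal_idem h I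
  refine ⟨Ideal.span {1 - e}, ?_, ?_⟩
  · rw [disjoint_iff, eq_bot_iff]
    intro x ⟨hx1, hx2⟩
    obtain ⟨a, ha⟩ := Ideal.mem_span_singleton'.mp hx1
    obtain ⟨b, hb⟩ := Ideal.mem_span_singleton'.mp hx2
    have h1 : x * e = x := by rw [← ha]; rw [mul_assoc, he]
    have h2 : x * e = 0 := by
      rw [← hb]; rw [mul_assoc, sub_mul, one_mul, he, sub_self, mul_zero]
    rw [Ideal.mem_bot, ← h1, h2]
  · rw [codisjoint_iff, eq_top_iff]
    intro x _
    have : x = x * e + x * (1 - e) := by ring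
    rw [this]
    exact Ideal.add_mem _ (Ideal.mem_sup_left (Ideal.mem_span_singleton'.mpr ⟨x, rfl⟩))
      (Ideal.mem_sup_right (Ideal.mem_span_singleton'.mpr ⟨x, rfl⟩))

theorem noetherian_semilocal {R : Type*} [CommRing R] [IsNoetherianRing R]
    (hidem : ∀ I : Ideal R, ¬ IsNilpotent I → ∃ e ∈ I, e ≠ (0 : R) ∧ e * e = e) :
    {M : Ideal R | M.IsMaximal}.Finite := by
  classical
  set N := nilradical R
  let Q := R ⧸ N
  let π : R →+* Q := Ideal.Quotient.mk N
  have hsurj : Function.Surjective π := Ideal.Quotient.mk_surjective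
  have hred : IsReduced Q :=
    (Ideal.isRadical_iff_quotient_reduced N).mp ((0 : Ideal R).radical_isRadical)
  -- hypothesis passes to Q
  have hQ : ∀ J : Ideal Q, J ≠ ⊥ → ∃ e ∈ J, e ≠ (0 : Q) ∧ e * e = e := by
    intro J hJ
    set J' := J.comap π
    have hJ' : ¬ IsNilpotent J' := by
      rintro ⟨n, hn⟩
      apply hJ
      rw [eq_bot_iff]
      intro x hx
      obtain ⟨y, rfl⟩ := hsurj x
      have hy : y ∈ J' := hx
      have : y ^ n ∈ J' ^ n := Ideal.pow_mem_pow hy n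
      rw [hn] at this
      have hnil : IsNilpotent y := ⟨n, by simpa using this⟩
      have : IsNilpotent (π y) := hnil.map π
      rw [Ideal.mem_bot]
      exact IsReduced.eq_zero _ this
    obtain ⟨e, heJ', he0, hee⟩ := hidem J' hJ'
    refine ⟨π e, heJ', ?_, by rw [← map_mul, hee]⟩
    intro hpe
    apply he0
    have : e ∈ N := by rwa [← Ideal.Quotient.eq_zero_iff_mem]
    exact IsIdempotentElem.eq_zero_of_isNilpotent hee this
  have : IsSemisimpleRing Q := semisimple_of_idem hQ
  have : IsArtinianRing Q := inferInstance
  have hfin : {J : Ideal Q | J.IsMaximal}.Finite := IsArtinianRing.setOfPred_isMaximal_finite Q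
  refine Set.Finite.subset (hfin.image (Ideal.comap π)) ?_
  intro M hM
  haveI := hM.isPrime
  have hNM : N ≤ M := nilradical_le_prime M
  have hcm : Ideal.comap π (Ideal.map π M) = M := by
    rw [Ideal.comap_map_of_surjective π hsurj M]
    refine sup_eq_left.mpr fun x hx => ?_
    have hx0 : π x = 0 := by simpa using hx
    exact hNM (Ideal.Quotient.eq_zero_iff_mem.mp hx0)
  have hmap : (M.map π).IsMaximal := by
    rcases Ideal.map_eq_top_or_isMaximal_of_surjective π hsurj hM with htop | hmax
    · exfalso
      apply hM.ne_top
      rw [← hcm, htop, Ideal.comap_top]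
    · exact hmax
  exact ⟨M.map π, hmap, hcm⟩
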